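/- If S ⊆ ℝᵖ is compact and nonempty, then the truncated moment cone R_d(S) = cone{[ξ]_d : ξ ∈ S} is closed. -/

import Mathlib

open Finset

lemma sum_extend_eq {M : Type*} [AddCommMonoid M] {m N : ℕ} (h : m ≤ N) {ι : Type*} [Fintype ι]
    (eι : ι ≃ Fin m) (f : ℕ → M) (hf : ∀ n, ¬ n < m → f n = 0) :
    ∑ i : Fin N, f i.1 = ∑ j : ι, f (eι j).1 := by
  rw [Fin.sum_univ_eq_sum_range]
  rw [← Finset.sum_subset (Finset.range_subset_range.2 h) (fun n _ hn => hf n (by simpa using hn))]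
  rw [← Fin.sum_univ_eq_sum_range]
  exact (Equiv.sum_comp eι (fun i : Fin m => f i.1)).symm

lemma isCompact_convexHull_of_isCompact {E : Type*} [NormedAddCommGroup E] [NormedSpace ℝ E]
    [FiniteDimensional ℝ E] {K : Set E} (hK : IsCompact K) : IsCompact (convexHull ℝ K) := by
  rcases K.eq_empty_or_nonempty with rfl | ⟨k₀, hk₀⟩
  · simpa using isCompact_empty
  set N := Module.finrank ℝ E + 1 with hN
  set F : (Fin N → ℝ) × (Fin N → E) → E := fun q => ∑ i, q.1 i • q.2 i with hFdef
  have hF : Continuous F := continuous_finset_sum _ fun i _ =>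
    ((continuous_apply i).comp continuous_fst).smul ((continuous_apply i).comp continuous_snd)
  set D : Set ((Fin N → ℝ) × (Fin N → E)) :=
    (stdSimplex ℝ (Fin N)) ×ˢ Set.univ.pi (fun _ : Fin N => K) with hDdef
  have hD : IsCompact D := (isCompact_stdSimplex (𝕜 := ℝ) (ι := Fin N)).prod (isCompact_univ_pi fun _ => hK)
  suffices h : convexHull ℝ K = F '' D by rw [h]; exact hD.image hF
  apply Set.Subset.antisymm
  · intro x hx
    obtain ⟨ι, hι, z, w, hrange, hindep, hpos, hsum, hx⟩ :=
      eq_pos_convex_span_of_mem_convexHull hx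
    letI := hι
    have hcard : Fintype.card ι ≤ N := by
      refine le_trans hindep.card_le_finrank_succ ?_
      exact Nat.add_le_add_right (Submodule.finrank_le _) 1
    set m := Fintype.card ι with hm
    let eι : ι ≃ Fin m := Fintype.equivFin ι
    let w'' : ℕ → ℝ := fun n => if h : n < m then w (eι.symm ⟨n, h⟩) else 0
    let g'' : ℕ → E := fun n =>
      if h : n < m then w (eι.symm ⟨n, h⟩) • z (eι.symm ⟨n, h⟩) else 0
    let w' : Fin N → ℝ := fun i => w'' i.1
    let v' : Fin N → E := fun i => if h : (i : ℕ) < m then z (eι.symm ⟨i, h⟩) else k₀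
    have hw0 : ∀ n, ¬ n < m → w'' n = 0 := fun n hn => dif_neg hn
    have hg0 : ∀ n, ¬ n < m → g'' n = 0 := fun n hn => dif_neg hn
    have hsumw : ∑ i : Fin N, w' i = 1 := by
      change ∑ i : Fin N, w'' (i : ℕ) = 1
      rw [sum_extend_eq hcard eι w'' hw0, ← hsum]
      refine Finset.sum_congr rfl fun j _ => ?_
      simp only [w'', (eι j).2, dif_pos, Fin.eta, Equiv.symm_apply_apply]
    have hmem : (w', v') ∈ D := by
      constructor
      · refine ⟨fun i => ?_, hsumw⟩
        by_cases h : (i : ℕ) < m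
        · simp only [w', w'', dif_pos h]; exact (hpos _).le
        · simp only [w', w'', dif_neg h]; exact le_refl 0
      · intro i _
        by_cases h : (i : ℕ) < m
        · simp only [v', dif_pos h]; exact hrange (Set.mem_range_self _)
        · simp only [v', dif_neg h]; exact hk₀
    refine ⟨(w', v'), hmem, ?_⟩
    have key : ∀ i : Fin N, w' i • v' i = g'' i.1 := by
      intro i
      by_cases h : (i : ℕ) < m
      · simp only [w', w'', v', g'', dif_pos h]
      · simp only [w', w'', v', g'', dif_neg h, zero_smul]
    calc F (w', v') = ∑ i : Fin N, g'' i.1 := Finset.sum_congr rfl fun i _ => key i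
      _ = ∑ j : ι, g'' (eι j).1 := sum_extend_eq hcard eι g'' hg0
      _ = x := by
            rw [← hx]
            refine Finset.sum_congr rfl fun j _ => ?_
            simp only [g'', (eι j).2, dif_pos, Fin.eta, Equiv.symm_apply_apply]
  · rintro _ ⟨⟨w, v⟩, ⟨hw, hv⟩, rfl⟩
    exact Convex.sum_mem (convex_convexHull ℝ K) (fun i _ => hw.1 i) hw.2
      (fun i _ => subset_convexHull ℝ K (hv i (Set.mem_univ i)))

/-- The total degree of a monomial exponent. -/
def fdeg {p : ℕ} (α : Fin p →₀ ℕ) : ℕ := α.sum fun _ e => e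

/-- The truncated monomial vector `[ξ]_d`, viewed as a truncated moment sequence. -/
def momVec (p d : ℕ) (ξ : Fin p → ℝ) : (Fin p →₀ ℕ) → ℝ :=
  fun α => if fdeg α ≤ d then ∏ i, ξ i ^ α i else 0

/-- The truncated moment cone `R_d(S) = cone{[ξ]_d : ξ ∈ S}`. -/
def momCone (p d : ℕ) (S : Set (Fin p → ℝ)) : Set ((Fin p →₀ ℕ) → ℝ) :=
  {z | ∃ (r : ℕ) (θ : Fin r → ℝ) (u : Fin r → (Fin p → ℝ)),
    (∀ i, 0 ≤ θ i) ∧ (∀ i, u i ∈ S) ∧ z = ∑ i, θ i • momVec p d (u i)}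

lemma fdeg_eq_sum {p : ℕ} (α : Fin p →₀ ℕ) : fdeg α = ∑ i, α i :=
  Finsupp.sum_fintype _ _ (fun _ => rfl)

lemma famfin (p d : ℕ) : Set.Finite {α : Fin p →₀ ℕ | fdeg α ≤ d} := by
  have hsub : {α : Fin p →₀ ℕ | fdeg α ≤ d} ⊆
      (Finsupp.equivFunOnFinite (α := Fin p) (M := ℕ)) ⁻¹'
        (Set.pi Set.univ fun _ : Fin p => Set.Iic d) := by
    intro α hα i _
    have : α i ≤ fdeg α := by
      rw [fdeg_eq_sum]
      exact Finset.single_le_sum (f := fun j => α j) (fun j _ => Nat.zero_le _) (mem_univ i)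
    exact le_trans this hα
  refine Set.Finite.subset (Set.Finite.preimage ?_ ?_) hsub
  · exact Set.injOn_of_injective (Finsupp.equivFunOnFinite.injective)
  · exact Set.Finite.pi fun _ => Set.finite_Iic d

/-- The finite set of monomial exponents of degree at most `d`. -/
noncomputable def monA (p d : ℕ) : Finset (Fin p →₀ ℕ) := (famfin p d).toFinset

lemma mem_monA {p d : ℕ} {α : Fin p →₀ ℕ} : α ∈ monA p d ↔ fdeg α ≤ d :=
  (famfin p d).mem_toFinset

/-- The truncated monomial vector as a vector indexed by the finite set `monA p d`. -/
noncomputable def gmap (p d : ℕ) (ξ : Fin p → ℝ) : (↥(monA p d) → ℝ) :=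
  fun α => ∏ i, ξ i ^ (α : Fin p →₀ ℕ) i

/-- Extension by zero from `monA p d`-indexed vectors to all moment sequences. -/
noncomputable def emap (p d : ℕ) : (↥(monA p d) → ℝ) →ₗ[ℝ] ((Fin p →₀ ℕ) → ℝ) where
  toFun := fun f α => if h : α ∈ monA p d then f ⟨α, h⟩ else 0
  map_add' := by
    intro f g; funext α; by_cases h : α ∈ monA p d <;> simp [h]
  map_smul' := by
    intro c f; funext α; by_cases h : α ∈ monA p d <;> simp [h]

lemma gmap_continuous (p d : ℕ) : Continuous (gmap p d) := by
  refine continuous_pi fun α => ?_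
  exact continuous_finset_prod _ fun i _ => (continuous_apply i).pow _

lemma emap_continuous (p d : ℕ) : Continuous (emap p d) := by
  refine continuous_pi fun α => ?_
  by_cases h : α ∈ monA p d
  · simp only [emap, LinearMap.coe_mk, AddHom.coe_mk, dif_pos h]
    exact continuous_apply _
  · simp only [emap, LinearMap.coe_mk, AddHom.coe_mk, dif_neg h]
    exact continuous_const

lemma momVec_eq (p d : ℕ) (ξ : Fin p → ℝ) : momVec p d ξ = emap p d (gmap p d ξ) := by
  funext α
  by_cases h : fdeg α ≤ d
  · simp [momVec, emap, gmap, h, mem_monA.2 h]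
  · simp [momVec, emap, gmap, h, mem_monA]

lemma momVec_zero_coord (p d : ℕ) (ξ : Fin p → ℝ) : momVec p d ξ 0 = 1 := by
  simp [momVec, fdeg]

/-- If `S ⊆ ℝᵖ` is compact and nonempty, then the truncated moment cone
`R_d(S) = cone{[ξ]_d : ξ ∈ S}` is closed. -/
theorem stmt_8 (p d : ℕ) (S : Set (Fin p → ℝ)) (hS : S.Nonempty)
    (hcompact : IsCompact S) :
    IsClosed (momCone p d S) := by
  classical
  set K : Set ((Fin p →₀ ℕ) → ℝ) := momVec p d '' S with hK
  set C : Set ((Fin p →₀ ℕ) → ℝ) := convexHull ℝ K with hCdef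
  -- C is compact
  have hKA : IsCompact (gmap p d '' S) := hcompact.image (gmap_continuous p d)
  have hCA : IsCompact (convexHull ℝ (gmap p d '' S)) := isCompact_convexHull_of_isCompact hKA
  have h1 : K = emap p d '' (gmap p d '' S) := by
    rw [hK, ← Set.image_comp]
    exact Set.image_congr fun ξ _ => momVec_eq p d ξ
  have hCim : C = emap p d '' (convexHull ℝ (gmap p d '' S)) := by
    rw [hCdef, h1, ← (emap p d).image_convexHull]
  have hC : IsCompact C := by
    rw [hCim]; exact hCA.image (emap_continuous p d)
  -- every element of C has coordinate 1 at the zero exponent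
  have hC1 : ∀ c ∈ C, c 0 = 1 := by
    have hsub : C ⊆ {f : (Fin p →₀ ℕ) → ℝ | f 0 = 1} := by
      rw [hCdef]
      refine convexHull_min ?_ ?_
      · rintro _ ⟨ξ, _, rfl⟩
        exact momVec_zero_coord p d ξ
      · intro f hf g hg a b ha hb hab
        simp only [Set.mem_setOf_eq] at hf hg ⊢
        simp [hf, hg, hab]
    exact fun c hc => hsub hc
  obtain ⟨ξ₀, hξ₀⟩ := hS
  have hCne : C.Nonempty := ⟨momVec p d ξ₀, subset_convexHull ℝ K ⟨ξ₀, hξ₀, rfl⟩⟩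
  -- characterization of momCone
  have hchar : momCone p d S = {z | ∃ t : ℝ, 0 ≤ t ∧ ∃ c ∈ C, z = t • c} := by
    apply Set.Subset.antisymm
    · rintro z ⟨r, θ, u, hθ, hu, rfl⟩
      set t := ∑ i, θ i with ht
      have ht0 : 0 ≤ t := Finset.sum_nonneg fun i _ => hθ i
      rcases eq_or_lt_of_le ht0 with heq | hlt
      · have hall : ∀ i ∈ (univ : Finset (Fin r)), θ i = 0 :=
          (Finset.sum_eq_zero_iff_of_nonneg fun i _ => hθ i).1 heq.symm
        obtain ⟨c₀, hc₀⟩ := hCne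
        refine ⟨0, le_refl 0, c₀, hc₀, ?_⟩
        rw [zero_smul]
        exact Finset.sum_eq_zero fun i hi => by rw [hall i hi, zero_smul]
      · have htne : t ≠ 0 := ne_of_gt hlt
        refine ⟨t, ht0, ∑ i, (θ i / t) • momVec p d (u i), ?_, ?_⟩
        · refine Convex.sum_mem (convex_convexHull ℝ K) (fun i _ => div_nonneg (hθ i) ht0)
            ?_ (fun i _ => subset_convexHull ℝ K ⟨u i, hu i, rfl⟩)
          rw [← Finset.sum_div, ← ht, div_self htne]
        · rw [Finset.smul_sum]
          refine Finset.sum_congr rfl fun i _ => ?_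
          rw [smul_smul]
          congr 1
          field_simp
    · rintro z ⟨t, ht, c, hc, rfl⟩
      rw [hCdef, _root_.convexHull_eq] at hc
      obtain ⟨ι, tF, w, zf, hw0, hw1, hzK, hcm⟩ := hc
      have hzS : ∀ i : ↥tF, ∃ ξ ∈ S, momVec p d ξ = zf i := by
        intro i
        rcases hzK i i.2 with ⟨ξ, hξ, h⟩
        exact ⟨ξ, hξ, h⟩
      choose U hU1 hU2 using hzS
      set eF := tF.equivFin with heF
      refine ⟨tF.card, fun j => t * w (eF.symm j), fun j => U (eF.symm j),
        fun j => mul_nonneg ht (hw0 _ (eF.symm j).2), fun j => hU1 _, ?_⟩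
      have : ∑ j : Fin tF.card, (t * w (eF.symm j)) • momVec p d (U (eF.symm j))
          = ∑ i : ↥tF, (t * w i) • momVec p d (U i) :=
        Equiv.sum_comp eF.symm (fun i : ↥tF => (t * w i) • momVec p d (U i))
      rw [this]
      have h2 : ∑ i : ↥tF, (t * w i) • momVec p d (U i)
          = t • ∑ i : ↥tF, w i • zf i := by
        rw [Finset.smul_sum]
        exact Finset.sum_congr rfl fun i _ => by rw [hU2, mul_smul]
      rw [h2]
      congr 1
      rw [← hcm, Finset.centerMass_eq_of_sum_1 _ _ hw1]
      exact (Finset.sum_coe_sort tF (fun i => w i • zf i)).symm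
    -- sequential closedness
  refine IsSeqClosed.isClosed ?_
  intro x z hmem hx
  rw [hchar] at hmem ⊢
  choose t ht c hcC hxe using hmem
  have htn : ∀ n, t n = x n 0 := by
    intro n
    rw [hxe n]
    simp [hC1 (c n) (hcC n)]
  have hx0 : Filter.Tendsto (fun n => x n 0) Filter.atTop (nhds (z 0)) :=
    ((continuous_apply (0 : Fin p →₀ ℕ)).tendsto z).comp hx
  have htt : Filter.Tendsto t Filter.atTop (nhds (z 0)) := by
    rw [show t = fun n => x n 0 from funext htn]
    exact hx0
  have hz0 : 0 ≤ z 0 := le_of_tendsto_of_tendsto' tendsto_const_nhds htt fun n => ht n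
  obtain ⟨clim, hclimC, φ, hφ, hcφ⟩ := hC.isSeqCompact fun n => hcC n
  have hxφ : Filter.Tendsto (fun k => x (φ k)) Filter.atTop (nhds z) :=
    hx.comp hφ.tendsto_atTop
  have htφ : Filter.Tendsto (fun k => t (φ k)) Filter.atTop (nhds (z 0)) :=
    htt.comp hφ.tendsto_atTop
  have hsm : Filter.Tendsto (fun k => t (φ k) • c (φ k)) Filter.atTop (nhds (z 0 • clim)) :=
    htφ.smul hcφ
  have hzeq : z = z 0 • clim := by
    refine tendsto_nhds_unique hxφ ?_
    have heq : (fun k => x (φ k)) = fun k => t (φ k) • c (φ k) := funext fun k => hxe (φ k)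
    rw [heq]
    exact hsm
  exact ⟨z 0, hz0, clim, hclimC, hzeq⟩
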